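/- Assume n ≥ k ≥ 2, |F| > k, and n + k is even. If Y = (y_{ij}) ∈ M_{n,k}(F) is such that det_{n,k}(A + λY) = det_{n,k}(A) for all A ∈ M_{n,k}(F) and all λ ∈ F, then y_{1,1} = 0. -/

import Mathlib

/- The Cullis determinant of an `n × k` matrix: the alternating sum of its maximal
(`k × k`) minors, indexed by strictly increasing selections of `k` rows. -/
open Classical in
noncomputable def cullisDet {F : Type*} [Field F] {n k : ℕ} (X : Matrix (Fin n) (Fin k) F) : F :=
  ∑ f ∈ Finset.univ.filter (fun f : Fin k → Fin n => StrictMono f),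
    (-1 : F) ^ (∑ α : Fin k, ((f α : ℕ) + (α : ℕ))) * (X.submatrix f id).det


open Polynomial Finset in
theorem aux_coeff_zero_prod {F : Type*} [Field F] {ι : Type*} [DecidableEq ι] (s : Finset ι)
    (a b : ι → F) :
    (∏ i ∈ s, (C (a i) + C (b i) * X)).coeff 0 = ∏ i ∈ s, a i := by
  rw [coeff_zero_eq_eval_zero, eval_prod]; simp

open Polynomial Finset in
theorem aux_coeff_one_prod {F : Type*} [Field F] {ι : Type*} [DecidableEq ι] (s : Finset ι)
    (a b : ι → F) :
    (∏ i ∈ s, (C (a i) + C (b i) * X)).coeff 1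
      = ∑ i ∈ s, b i * ∏ j ∈ s.erase i, a j := by
  induction s using Finset.induction_on with
  | empty => simp [Polynomial.coeff_one]
  | @insert i s hi ih =>
    rw [Finset.prod_insert hi, Finset.sum_insert hi]
    have h1 : ((C (a i) + C (b i) * X) * ∏ j ∈ s, (C (a j) + C (b j) * X)).coeff 1
        = a i * (∏ j ∈ s, (C (a j) + C (b j) * X)).coeff 1
          + b i * (∏ j ∈ s, (C (a j) + C (b j) * X)).coeff 0 := by
      rw [add_mul, mul_assoc]
      simp [coeff_add, coeff_C_mul, coeff_X_mul]
    rw [h1, ih, aux_coeff_zero_prod, Finset.erase_insert hi, Finset.mul_sum, add_comm]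
    congr 1
    refine Finset.sum_congr rfl fun j hj => ?_
    have hji : j ≠ i := fun e => hi (e ▸ hj)
    rw [Finset.erase_insert_of_ne hji.symm, Finset.prod_insert (fun hmem => hi (Finset.mem_of_mem_erase hmem))]
    ring

open Polynomial Finset Equiv in
theorem aux_coeff_one_det {F : Type*} [Field F] {k : ℕ}
    (A B : Matrix (Fin k) (Fin k) F) :
    (Matrix.det (Matrix.of fun u c => C (A u c) + C (B u c) * X)).coeff 1
      = ∑ σ : Equiv.Perm (Fin k), ((Equiv.Perm.sign σ : ℤ) : F)
          * ∑ u : Fin k, B (σ u) u * ∏ u' ∈ Finset.univ.erase u, A (σ u') u' := by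
  rw [Matrix.det_apply', Polynomial.finset_sum_coeff]
  refine Finset.sum_congr rfl fun σ _ => ?_
  have hC : (((Equiv.Perm.sign σ : ℤ) : F[X])) = C (((Equiv.Perm.sign σ : ℤ) : F)) := by
    simp
  rw [hC, Polynomial.coeff_C_mul]
  congr 1
  exact aux_coeff_one_prod Finset.univ (fun u => A (σ u) u) (fun u => B (σ u) u)

open Polynomial Finset in
theorem aux_natDegree_det {F : Type*} [Field F] {k : ℕ}
    (A B : Matrix (Fin k) (Fin k) F) :
    (Matrix.det (Matrix.of fun u c => C (A u c) + C (B u c) * X)).natDegree ≤ k := by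
  rw [Matrix.det_apply']
  refine le_trans (Polynomial.natDegree_sum_le _ _) ?_
  rw [Finset.fold_max_le]
  constructor
  · exact Nat.zero_le _
  intro σ _
  refine le_trans (Polynomial.natDegree_mul_le) ?_
  have h1 : (((Equiv.Perm.sign σ : ℤ) : F[X])).natDegree = 0 := Polynomial.natDegree_intCast _
  rw [h1, zero_add]
  refine le_trans (Polynomial.natDegree_prod_le _ _) ?_
  calc ∑ u : Fin k, ((Matrix.of fun u c => C (A u c) + C (B u c) * X) (σ u) u).natDegree
      ≤ ∑ _u : Fin k, 1 := by
        refine Finset.sum_le_sum fun u _ => ?_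
        show (C (A (σ u) u) + C (B (σ u) u) * X).natDegree ≤ 1
        refine le_trans (Polynomial.natDegree_add_le _ _) ?_
        simp only [Polynomial.natDegree_C, max_le_iff]
        refine ⟨Nat.zero_le _, le_trans Polynomial.natDegree_mul_le ?_⟩
        simp
    _ = k := by simp

open Polynomial Finset in
theorem aux_eval_det {F : Type*} [Field F] {k : ℕ}
    (A B : Matrix (Fin k) (Fin k) F) (lam : F) :
    (Matrix.det (Matrix.of fun u c => C (A u c) + C (B u c) * X)).eval lam
      = Matrix.det (Matrix.of fun u c => A u c + lam * B u c) := by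
  have := RingHom.map_det (Polynomial.evalRingHom lam)
    (Matrix.of fun u c => C (A u c) + C (B u c) * X)
  rw [show (Polynomial.evalRingHom lam) (Matrix.det (Matrix.of fun u c => C (A u c) + C (B u c) * X))
      = (Matrix.det (Matrix.of fun u c => C (A u c) + C (B u c) * X)).eval lam from rfl] at this
  rw [this]
  congr 1
  ext u c
  simp only [RingHom.mapMatrix_apply, Matrix.map_apply, Matrix.of_apply, Polynomial.coe_evalRingHom, Polynomial.eval_add,
    Polynomial.eval_mul, Polynomial.eval_C, Polynomial.eval_X]
  ring

theorem aux_perm_eq {α : Type*} (a : α) (σ τ : Equiv.Perm α)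
    (h : ∀ x, x ≠ a → σ x = τ x) : σ = τ := by
  have ha : σ a = τ a := by
    by_contra hne
    set y := τ.symm (σ a) with hy
    have h2 : τ y = σ a := Equiv.apply_symm_apply τ (σ a)
    have hya : y ≠ a := by
      intro e
      exact hne (by rw [← h2]; exact congrArg τ e)
    have h3 : σ y = σ a := by rw [h y hya, h2]
    exact hya (σ.injective h3)
  refine Equiv.ext fun x => ?_
  by_cases hx : x = a
  · rw [hx]; exact ha
  · exact h x hx

/-- rows with a `1` entry in column `c` of the auxiliary matrix -/
def auxRow (m₁ j u : ℕ) : ℕ := if u = 1 then j else m₁ + u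

noncomputable def auxA (F : Type*) [Field F] (m₁ k₂ j : ℕ) :
    Matrix (Fin (m₁+k₂+2)) (Fin (k₂+2)) F :=
  fun x c => if (x : ℕ) = auxRow m₁ j (c : ℕ) ∧ 1 ≤ (c : ℕ) then 1 else 0

def auxR (m₁ k₂ : ℕ) (x : ℕ) : Fin (m₁+k₂+2) := ⟨x % (m₁+k₂+2), Nat.mod_lt _ (by omega)⟩

def auxr (j i : ℕ) : ℕ := if i < j then i else i + 1

def auxF (m₁ k₂ j i : ℕ) : Fin (k₂+2) → Fin (m₁+k₂+2) :=
  fun u => auxR m₁ k₂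
    (if (u : ℕ) = 0 then min (auxr j i) j else if (u : ℕ) = 1 then max (auxr j i) j
      else m₁ + (u : ℕ))

theorem auxR_val (m₁ k₂ x : ℕ) (hx : x < m₁+k₂+2) : ((auxR m₁ k₂ x : Fin _) : ℕ) = x :=
  Nat.mod_eq_of_lt hx

theorem auxr_le (j i m₁ : ℕ) (hj : j ≤ m₁ + 1) (hi : i < m₁ + 1) : auxr j i ≤ m₁ + 1 := by
  unfold auxr; split <;> omega

theorem auxr_ne (j i : ℕ) : auxr j i ≠ j := by
  unfold auxr; split <;> omega

theorem auxF_val (m₁ k₂ j i : ℕ) (hj : j ≤ m₁ + 1) (hi : i < m₁ + 1) (u : Fin (k₂+2)) :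
    ((auxF m₁ k₂ j i u : Fin _) : ℕ)
      = (if (u : ℕ) = 0 then min (auxr j i) j else if (u : ℕ) = 1 then max (auxr j i) j
          else m₁ + (u : ℕ)) := by
  have hr := auxr_le j i m₁ hj hi
  have hu := u.isLt
  unfold auxF
  apply auxR_val
  split
  · omega
  split
  · omega
  · omega

theorem auxF_strictMono (m₁ k₂ j i : ℕ) (hj : j ≤ m₁ + 1) (hi : i < m₁ + 1) :
    StrictMono (auxF m₁ k₂ j i) := by
  have hr := auxr_le j i m₁ hj hi
  have hrne := auxr_ne j i
  intro u v huv
  rw [Fin.lt_def] at huv ⊢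
  rw [auxF_val m₁ k₂ j i hj hi, auxF_val m₁ k₂ j i hj hi]
  have h1 : min (auxr j i) j < max (auxr j i) j := min_lt_max.mpr hrne
  have h2 : max (auxr j i) j ≤ m₁ + 1 := max_le hr hj
  have hv := v.isLt
  have hu := u.isLt
  split_ifs <;> omega

theorem auxF_inj (m₁ k₂ j : ℕ) (hj : j ≤ m₁ + 1) {i i' : ℕ} (hi : i < m₁ + 1)
    (hi' : i' < m₁ + 1) (h : auxF m₁ k₂ j i = auxF m₁ k₂ j i') : i = i' := by
  have h0 := congrArg Fin.val (congrFun h 0)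
  have h1 := congrArg Fin.val (congrFun h 1)
  rw [auxF_val m₁ k₂ j i hj hi, auxF_val m₁ k₂ j i' hj hi'] at h0 h1
  simp only [Fin.val_zero, Fin.val_one] at h0 h1
  simp at h0 h1
  have hne := auxr_ne j i
  have hne' := auxr_ne j i'
  have e1 := min_add_max (auxr j i) j
  have e2 := min_add_max (auxr j i') j
  have : auxr j i = auxr j i' := by omega
  unfold auxr at this
  split at this <;> split at this <;> omega

noncomputable def auxSig (k₂ j i : ℕ) : Equiv.Perm (Fin (k₂+2)) :=
  if auxr j i < j then 1 else Equiv.swap 0 1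

theorem aux_fin_one_ne_zero (k₂ : ℕ) : (1 : Fin (k₂+2)) ≠ 0 := by
  simp [Fin.ext_iff]

theorem auxSig_prop0 (m₁ k₂ j i : ℕ) (hj : j ≤ m₁+1) (hi : i < m₁+1) :
    auxF m₁ k₂ j i (auxSig k₂ j i 0) = auxR m₁ k₂ (auxr j i) := by
  have hr := auxr_le j i m₁ hj hi
  have hrne := auxr_ne j i
  apply Fin.ext
  rw [show ((auxR m₁ k₂ (auxr j i) : Fin _) : ℕ) = auxr j i from auxR_val _ _ _ (by omega)]
  unfold auxSig
  split
  next hlt =>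
    rw [show ((1 : Equiv.Perm (Fin (k₂+2))) 0) = 0 from rfl]
    simp [auxF_val m₁ k₂ j i hj hi]
    omega
  next hge =>
    rw [Equiv.swap_apply_left]
    simp [auxF_val m₁ k₂ j i hj hi]
    omega

theorem auxSig_prop (m₁ k₂ j i : ℕ) (hj : j ≤ m₁+1) (hi : i < m₁+1)
    (u : Fin (k₂+2)) (hu : u ≠ 0) :
    ((auxF m₁ k₂ j i (auxSig k₂ j i u) : Fin _) : ℕ) = auxRow m₁ j (u : ℕ) := by
  have hr := auxr_le j i m₁ hj hi
  have hrne := auxr_ne j i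
  have huv : (u : ℕ) ≠ 0 := by
    intro e; exact hu (Fin.ext (by simpa using e))
  rcases Nat.lt_or_ge (u : ℕ) 2 with hu2 | hu2
  · -- u = 1
    have hu1 : u = 1 := Fin.ext (by simp; omega)
    subst hu1
    unfold auxSig auxRow
    split
    next hlt =>
      rw [show ((1 : Equiv.Perm (Fin (k₂+2))) 1) = 1 from rfl]
      simp [auxF_val m₁ k₂ j i hj hi]
      omega
    next hge =>
      rw [Equiv.swap_apply_right]
      simp [auxF_val m₁ k₂ j i hj hi]
      omega
  · -- u ≥ 2 : auxSig fixes u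
    have h1 : auxSig k₂ j i u = u := by
      unfold auxSig
      split
      · rfl
      · refine Equiv.swap_apply_of_ne_of_ne hu ?_
        intro e; rw [e] at hu2; simp at hu2
    rw [h1, auxF_val m₁ k₂ j i hj hi]
    unfold auxRow
    rw [if_neg (by omega), if_neg (by omega), if_neg (by omega)]

theorem aux_inner_sum {F : Type*} [Field F] {k : ℕ}
    (A' B' : Matrix (Fin (k+2)) (Fin (k+2)) F)
    (hA0 : ∀ x, A' x 0 = 0) (σ : Equiv.Perm (Fin (k+2))) :
    ∑ u : Fin (k+2), B' (σ u) u * ∏ u' ∈ Finset.univ.erase u, A' (σ u') u'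
      = B' (σ 0) 0 * ∏ u' ∈ Finset.univ.erase 0, A' (σ u') u' := by
  apply Finset.sum_eq_single
  · intro u _ hu
    have h0 : (0 : Fin (k+2)) ∈ Finset.univ.erase u :=
      Finset.mem_erase.mpr ⟨Ne.symm hu, Finset.mem_univ _⟩
    have hz : (∏ u' ∈ Finset.univ.erase u, A' (σ u') u') = 0 :=
      Finset.prod_eq_zero h0 (hA0 (σ 0))
    rw [hz, mul_zero]
  · intro hmem; exact absurd (Finset.mem_univ _) hmem

theorem auxA_col0 {F : Type*} [Field F] (m₁ k₂ j : ℕ) (x : Fin (m₁+k₂+2)) :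
    auxA F m₁ k₂ j x 0 = 0 := by
  unfold auxA
  rw [if_neg]
  simp

theorem auxA_ne {F : Type*} [Field F] {m₁ k₂ j : ℕ} {x : Fin (m₁+k₂+2)} {c : Fin (k₂+2)}
    (h : auxA F m₁ k₂ j x c ≠ 0) : (x : ℕ) = auxRow m₁ j (c : ℕ) := by
  unfold auxA at h
  split at h
  next hc => exact hc.1
  next => exact absurd rfl h

theorem auxA_eq_one {F : Type*} [Field F] (m₁ k₂ j : ℕ) (x : Fin (m₁+k₂+2)) (c : Fin (k₂+2))
    (h1 : 1 ≤ (c : ℕ)) (h2 : (x : ℕ) = auxRow m₁ j (c : ℕ)) : auxA F m₁ k₂ j x c = 1 :=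
  if_pos ⟨h2, h1⟩

open Polynomial Finset in
theorem auxV {F : Type*} [Field F] (m₁ k₂ j i : ℕ) (hj : j ≤ m₁+1) (hi : i < m₁+1)
    (Y : Matrix (Fin (m₁+k₂+2)) (Fin (k₂+2)) F) :
    (Matrix.det (Matrix.of fun u c => C (auxA F m₁ k₂ j (auxF m₁ k₂ j i u) c)
        + C (Y (auxF m₁ k₂ j i u) c) * X)).coeff 1
      = (if auxr j i < j then 1 else -1) * Y (auxR m₁ k₂ (auxr j i)) 0 := by
  have hsm := auxF_strictMono m₁ k₂ j i hj hi
  have hinj := hsm.injective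
  have hA0 : ∀ x : Fin (k₂+2), auxA F m₁ k₂ j (auxF m₁ k₂ j i x) (0 : Fin (k₂+2)) = 0 :=
    fun x => auxA_col0 m₁ k₂ j _
  rw [aux_coeff_one_det (fun u c => auxA F m₁ k₂ j (auxF m₁ k₂ j i u) c)
    (fun u c => Y (auxF m₁ k₂ j i u) c)]
  rw [Finset.sum_eq_single_of_mem (auxSig k₂ j i) (Finset.mem_univ _)]
  · rw [aux_inner_sum (fun u c => auxA F m₁ k₂ j (auxF m₁ k₂ j i u) c)
      (fun u c => Y (auxF m₁ k₂ j i u) c) hA0 (auxSig k₂ j i)]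
    have hone : (∏ u' ∈ Finset.univ.erase (0 : Fin (k₂+2)),
        auxA F m₁ k₂ j (auxF m₁ k₂ j i (auxSig k₂ j i u')) u') = 1 := by
      apply Finset.prod_eq_one
      intro u hu
      have hu0 : u ≠ 0 := (Finset.mem_erase.mp hu).1
      have hval : 1 ≤ (u : ℕ) := by
        rcases Nat.eq_zero_or_pos (u : ℕ) with h | h
        · exact absurd (Fin.ext (by simpa using h)) hu0
        · exact h
      exact auxA_eq_one m₁ k₂ j _ u hval (auxSig_prop m₁ k₂ j i hj hi u hu0)
    show ((Equiv.Perm.sign (auxSig k₂ j i) : ℤ) : F)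
        * (Y (auxF m₁ k₂ j i (auxSig k₂ j i 0)) 0 * _) = _
    rw [hone, mul_one, auxSig_prop0 m₁ k₂ j i hj hi]
    unfold auxSig
    split
    · simp
    · rw [Equiv.Perm.sign_swap (aux_fin_one_ne_zero k₂).symm]
      simp
  · intro σ _ hσ
    rw [aux_inner_sum (fun u c => auxA F m₁ k₂ j (auxF m₁ k₂ j i u) c)
      (fun u c => Y (auxF m₁ k₂ j i u) c) hA0 σ]
    have hprod : (∏ u' ∈ Finset.univ.erase (0 : Fin (k₂+2)),
        auxA F m₁ k₂ j (auxF m₁ k₂ j i (σ u')) u') = 0 := by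
      by_contra hP
      replace hP := Finset.prod_ne_zero_iff.mp hP
      have : σ = auxSig k₂ j i := by
        apply aux_perm_eq 0
        intro u hu
        have hu' : u ∈ Finset.univ.erase (0 : Fin (k₂+2)) :=
          Finset.mem_erase.mpr ⟨hu, Finset.mem_univ _⟩
        have h1 := auxA_ne (hP u hu')
        have h2 := auxSig_prop m₁ k₂ j i hj hi u hu
        exact hinj (Fin.ext (by rw [h1, h2]))
      exact hσ this
    show ((Equiv.Perm.sign σ : ℤ) : F) * (Y (auxF m₁ k₂ j i (σ 0)) 0 * _) = 0
    rw [hprod, mul_zero, mul_zero]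

open Polynomial Finset in
theorem auxZ {F : Type*} [Field F] (m₁ k₂ j : ℕ) (hj : j ≤ m₁+1)
    (Y : Matrix (Fin (m₁+k₂+2)) (Fin (k₂+2)) F) (f : Fin (k₂+2) → Fin (m₁+k₂+2))
    (hf : StrictMono f) (hnot : ∀ i, i < m₁+1 → f ≠ auxF m₁ k₂ j i) :
    (Matrix.det (Matrix.of fun u c => C (auxA F m₁ k₂ j (f u) c)
        + C (Y (f u) c) * X)).coeff 1 = 0 := by
  have hA0 : ∀ x : Fin (k₂+2), auxA F m₁ k₂ j (f x) (0 : Fin (k₂+2)) = 0 :=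
    fun x => auxA_col0 m₁ k₂ j _
  rw [aux_coeff_one_det (fun u c => auxA F m₁ k₂ j (f u) c) (fun u c => Y (f u) c)]
  apply Finset.sum_eq_zero
  intro σ _
  rw [aux_inner_sum (fun u c => auxA F m₁ k₂ j (f u) c) (fun u c => Y (f u) c) hA0 σ]
  have hprod : (∏ u' ∈ Finset.univ.erase (0 : Fin (k₂+2)),
      auxA F m₁ k₂ j (f (σ u')) u') = 0 := by
    by_contra hP
    replace hP := Finset.prod_ne_zero_iff.mp hP
    have hval : ∀ u : Fin (k₂+2), u ≠ 0 → ((f (σ u)) : ℕ) = auxRow m₁ j (u : ℕ) := by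
      intro u hu
      exact auxA_ne (hP u (Finset.mem_erase.mpr ⟨hu, Finset.mem_univ _⟩))
    have hone := aux_fin_one_ne_zero k₂
    have hj' : ((f (σ 1)) : ℕ) = j := by
      rw [hval 1 hone]
      simp [auxRow]
    set rr := ((f (σ 0)) : ℕ) with hrr
    have hrrj : rr ≠ j := by
      intro e
      have he : f (σ 0) = f (σ 1) := Fin.ext (by rw [← hrr, e, hj'])
      exact hone (σ.injective (hf.injective he)).symm
    have hrr_lt : rr < m₁+k₂+2 := (f (σ 0)).isLt
    have hrrle : rr ≤ m₁+1 := by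
      by_contra hgt
      push_neg at hgt
      have hck : rr - m₁ < k₂+2 := by omega
      set c : Fin (k₂+2) := ⟨rr - m₁, hck⟩ with hc
      have hcne : c ≠ 0 := by
        intro e
        have := congrArg Fin.val e
        simp [hc] at this
        omega
      have h2 := hval c hcne
      have h3 : auxRow m₁ j (c : ℕ) = rr := by
        unfold auxRow
        rw [if_neg (by simp [hc]; omega)]
        simp [hc]
        omega
      have he : f (σ c) = f (σ 0) := Fin.ext (by rw [h2, h3])
      exact hcne (σ.injective (hf.injective he))
    set i := if rr < j then rr else rr - 1 with hi_def
    have hi : i < m₁+1 := by rw [hi_def]; split <;> omega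
    have hri : auxr j i = rr := by
      rw [hi_def]; unfold auxr; split_ifs <;> omega
    apply hnot i hi
    have hcard : (Finset.univ.image f).card = k₂+2 := by
      rw [Finset.card_image_of_injective _ hf.injective, Finset.card_univ, Fintype.card_fin]
    have hfs : ∀ x, f x ∈ Finset.univ.image f :=
      fun x => Finset.mem_image_of_mem f (Finset.mem_univ x)
    have hFs : ∀ x, auxF m₁ k₂ j i x ∈ Finset.univ.image f := by
      intro u
      have hval_u := auxF_val m₁ k₂ j i hj hi u
      rcases Nat.lt_or_ge (u : ℕ) 1 with hu | hu
      · have hu0 : (u : ℕ) = 0 := by omega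
        have hv : (auxF m₁ k₂ j i u : ℕ) = min rr j := by
          rw [hval_u, if_pos hu0, hri]
        rcases Nat.lt_or_ge rr j with hc | hc
        · have he : auxF m₁ k₂ j i u = f (σ 0) := Fin.ext (by rw [hv, min_eq_left hc.le])
          rw [he]; exact hfs _
        · have hjr : j < rr := by omega
          have he : auxF m₁ k₂ j i u = f (σ 1) :=
            Fin.ext (by rw [hv, min_eq_right hjr.le, hj'])
          rw [he]; exact hfs _
      rcases Nat.lt_or_ge (u : ℕ) 2 with hu1 | hu2
      · have hu1' : (u : ℕ) = 1 := by omega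
        have hv : (auxF m₁ k₂ j i u : ℕ) = max rr j := by
          rw [hval_u, if_neg (by omega), if_pos hu1', hri]
        rcases Nat.lt_or_ge rr j with hc | hc
        · have he : auxF m₁ k₂ j i u = f (σ 1) :=
            Fin.ext (by rw [hv, max_eq_right hc.le, hj'])
          rw [he]; exact hfs _
        · have hjr : j < rr := by omega
          have he : auxF m₁ k₂ j i u = f (σ 0) := Fin.ext (by rw [hv, max_eq_left hjr.le])
          rw [he]; exact hfs _
      · have hune : u ≠ 0 := by
          intro e
          rw [e] at hu2
          simp at hu2
        have h2 := hval u hune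
        have he : auxF m₁ k₂ j i u = f (σ u) := by
          apply Fin.ext
          rw [hval_u, if_neg (by omega), if_neg (by omega), h2]
          unfold auxRow
          rw [if_neg (by omega)]
        rw [he]; exact hfs _
    have e1 := Finset.orderEmbOfFin_unique hcard hfs hf
    have e2 := Finset.orderEmbOfFin_unique hcard hFs (auxF_strictMono m₁ k₂ j i hj hi)
    rw [e1, e2]
  show ((Equiv.Perm.sign σ : ℤ) : F) * (Y (f (σ 0)) 0 * _) = 0
  rw [hprod, mul_zero, mul_zero]


open Classical in
noncomputable def auxQ (F : Type*) [Field F] (n k : ℕ) (A Y : Matrix (Fin n) (Fin k) F) :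
    Polynomial F :=
  ∑ f ∈ Finset.univ.filter (fun f : Fin k → Fin n => StrictMono f),
    Polynomial.C ((-1 : F) ^ (∑ α : Fin k, ((f α : ℕ) + (α : ℕ)))) *
      Matrix.det (Matrix.of fun u c =>
        Polynomial.C (A (f u) c) + Polynomial.C (Y (f u) c) * Polynomial.X)

theorem auxQ_eval {F : Type*} [Field F] (n k : ℕ) (A Y : Matrix (Fin n) (Fin k) F) (lam : F) :
    (auxQ F n k A Y).eval lam = cullisDet (A + lam • Y) := by
  unfold auxQ cullisDet
  rw [Polynomial.eval_finset_sum]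
  refine Finset.sum_congr rfl fun f _ => ?_
  rw [Polynomial.eval_mul, Polynomial.eval_C,
    aux_eval_det (fun u c => A (f u) c) (fun u c => Y (f u) c)]
  congr 1

theorem auxQ_natDegree {F : Type*} [Field F] (n k : ℕ) (A Y : Matrix (Fin n) (Fin k) F) :
    (auxQ F n k A Y).natDegree ≤ k := by
  unfold auxQ
  refine le_trans (Polynomial.natDegree_sum_le _ _) ?_
  rw [Finset.fold_max_le]
  exact ⟨Nat.zero_le _, fun f _ =>
    le_trans (Polynomial.natDegree_C_mul_le _ _) (aux_natDegree_det _ _)⟩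

theorem auxQ_coeff_one {F : Type*} [Field F] (n k : ℕ) (A Y : Matrix (Fin n) (Fin k) F)
    (h : ∀ lam : F, (auxQ F n k A Y).eval lam = (auxQ F n k A Y).eval 0)
    (hF : (k : Cardinal) < Cardinal.mk F) : (auxQ F n k A Y).coeff 1 = 0 := by
  have hp : auxQ F n k A Y - Polynomial.C ((auxQ F n k A Y).eval 0) = 0 := by
    apply Polynomial.eq_zero_of_forall_eval_zero_of_natDegree_lt_card
    · intro r
      rw [Polynomial.eval_sub, Polynomial.eval_C, h r, sub_self]
    · refine lt_of_le_of_lt ?_ hF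
      have hle : (auxQ F n k A Y - Polynomial.C ((auxQ F n k A Y).eval 0)).natDegree ≤ k := by
        refine le_trans (Polynomial.natDegree_sub_le _ _) ?_
        simp only [Polynomial.natDegree_C, max_le_iff]
        exact ⟨auxQ_natDegree n k A Y, Nat.zero_le _⟩
      exact_mod_cast Nat.cast_le.mpr hle
  have h2 := congrArg (fun p => Polynomial.coeff p 1) hp
  simpa [Polynomial.coeff_sub, Polynomial.coeff_C] using h2

open Classical in
theorem auxQ_coeff_expand {F : Type*} [Field F] (n k : ℕ) (A Y : Matrix (Fin n) (Fin k) F) :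
    (auxQ F n k A Y).coeff 1
      = ∑ f ∈ Finset.univ.filter (fun f : Fin k → Fin n => StrictMono f),
          (-1 : F) ^ (∑ α : Fin k, ((f α : ℕ) + (α : ℕ))) *
            (Matrix.det (Matrix.of fun u c =>
              Polynomial.C (A (f u) c) + Polynomial.C (Y (f u) c) * Polynomial.X)).coeff 1 := by
  unfold auxQ
  rw [Polynomial.finset_sum_coeff]
  exact Finset.sum_congr rfl fun f _ => Polynomial.coeff_C_mul _

theorem aux_expo (m₁ k₂ j i : ℕ) (hj : j ≤ m₁+1) (hi : i < m₁+1) :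
    ∑ α : Fin (k₂+2), ((auxF m₁ k₂ j i α : ℕ) + (α : ℕ))
      = (auxr j i + j + 1 + k₂ * m₁) + 2 * ((∑ u ∈ Finset.range k₂, u) + 2*k₂) := by
  have h4 := min_add_max (auxr j i) j
  set lo := min (auxr j i) j with hlo
  set hi' := max (auxr j i) j with hhi
  have h1 : ∑ α : Fin (k₂+2), ((auxF m₁ k₂ j i α : ℕ) + (α : ℕ))
      = ∑ t ∈ Finset.range (k₂+2),
          ((if t = 0 then lo else if t = 1 then hi' else m₁ + t) + t) := by
    rw [← Fin.sum_univ_eq_sum_range]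
    refine Finset.sum_congr rfl fun α _ => ?_
    rw [auxF_val m₁ k₂ j i hj hi]
  rw [h1, Finset.sum_range_succ', Finset.sum_range_succ']
  have h2 : ∑ t ∈ Finset.range k₂,
      ((if t+1+1 = 0 then lo else if t+1+1 = 1 then hi'
        else m₁ + (t+1+1)) + (t+1+1)) = k₂*(m₁+4) + 2 * ∑ t ∈ Finset.range k₂, t := by
    have h3 : ∀ t ∈ Finset.range k₂,
        ((if t+1+1 = 0 then lo else if t+1+1 = 1 then hi'
          else m₁ + (t+1+1)) + (t+1+1)) = (m₁+4) + 2*t := by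
      intro t _
      rw [if_neg (by omega), if_neg (by omega)]
      ring
    rw [Finset.sum_congr rfl h3, Finset.sum_add_distrib, Finset.sum_const, Finset.card_range,
      smul_eq_mul, ← Finset.mul_sum]
  rw [h2]
  have h5 : k₂*(m₁+4) = k₂*m₁ + 4*k₂ := by ring
  norm_num
  omega

/-- for `n ≥ k ≥ 2`, `|F| > k`, `n + k` even, if adding any multiple of `Y`
never changes the Cullis determinant, then the `(1,1)` entry of `Y` vanishes. -/
theorem cullis_radical_entry_zero {F : Type*} [Field F] (n k : ℕ)
    (hk : 2 ≤ k) (hn : k ≤ n) (hF : (k : Cardinal) < Cardinal.mk F)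
    (hpar : Even (n + k)) (Y : Matrix (Fin n) (Fin k) F)
    (h : ∀ (A : Matrix (Fin n) (Fin k) F) (lam : F),
      cullisDet (A + lam • Y) = cullisDet A) :
    Y ⟨0, by omega⟩ ⟨0, by omega⟩ = 0 := by
  classical
  obtain ⟨k₂, rfl⟩ : ∃ k₂, k = k₂ + 2 := ⟨k - 2, by omega⟩
  obtain ⟨m₁, rfl⟩ : ∃ m₁, n = m₁ + k₂ + 2 := ⟨n - k₂ - 2, by omega⟩
  have rel : ∀ j, j ≤ m₁ + 1 →
      ∑ i ∈ Finset.range (m₁+1), (-1:F)^i * Y (auxR m₁ k₂ (auxr j i)) 0 = 0 := by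
    intro j hj
    have hq1 : (auxQ F (m₁+k₂+2) (k₂+2) (auxA F m₁ k₂ j) Y).coeff 1 = 0 := by
      apply auxQ_coeff_one _ _ _ _ _ hF
      intro lam
      rw [auxQ_eval, auxQ_eval, h (auxA F m₁ k₂ j) lam, h (auxA F m₁ k₂ j) 0]
    rw [auxQ_coeff_expand] at hq1
    set E := (Finset.range (m₁+1)).image (auxF m₁ k₂ j) with hE
    have hEsub : E ⊆ Finset.univ.filter
        (fun f : Fin (k₂+2) → Fin (m₁+k₂+2) => StrictMono f) := by
      intro f hf
      rcases Finset.mem_image.mp hf with ⟨i, hi, rfl⟩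
      exact Finset.mem_filter.mpr ⟨Finset.mem_univ _,
        auxF_strictMono m₁ k₂ j i hj (Finset.mem_range.mp hi)⟩
    have hzero : ∀ f ∈ Finset.univ.filter
        (fun f : Fin (k₂+2) → Fin (m₁+k₂+2) => StrictMono f), f ∉ E →
        (-1 : F) ^ (∑ α : Fin (k₂+2), ((f α : ℕ) + (α : ℕ))) *
          (Matrix.det (Matrix.of fun u c =>
            Polynomial.C (auxA F m₁ k₂ j (f u) c) + Polynomial.C (Y (f u) c) * Polynomial.X)).coeff 1
          = 0 := by
      intro f hf hfE
      have hsm := (Finset.mem_filter.mp hf).2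
      have hnot : ∀ i, i < m₁+1 → f ≠ auxF m₁ k₂ j i := by
        intro i hi e
        exact hfE (hE ▸ Finset.mem_image.mpr ⟨i, Finset.mem_range.mpr hi, e.symm⟩)
      rw [auxZ m₁ k₂ j hj Y f hsm hnot, mul_zero]
    rw [← Finset.sum_subset hEsub hzero] at hq1
    rw [hE, Finset.sum_image (fun i hi i' hi' e =>
      auxF_inj m₁ k₂ j hj (Finset.mem_range.mp hi) (Finset.mem_range.mp hi') e)] at hq1
    have hterm : ∀ i ∈ Finset.range (m₁+1),
        (-1 : F) ^ (∑ α : Fin (k₂+2), ((auxF m₁ k₂ j i α : ℕ) + (α : ℕ))) *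
          (Matrix.det (Matrix.of fun u c =>
            Polynomial.C (auxA F m₁ k₂ j (auxF m₁ k₂ j i u) c)
              + Polynomial.C (Y (auxF m₁ k₂ j i u) c) * Polynomial.X)).coeff 1
          = (-1:F)^(j + 1 + k₂*m₁) * ((-1:F)^i * Y (auxR m₁ k₂ (auxr j i)) 0) := by
      intro i hi
      have hi' := Finset.mem_range.mp hi
      rw [auxV m₁ k₂ j i hj hi', aux_expo m₁ k₂ j i hj hi']
      rw [pow_add (-1:F) _ (2 * _), pow_mul, neg_one_sq, one_pow, mul_one]
      have hp : ∀ a b : ℕ, (-1:F)^(a+b) = (-1:F)^a * (-1:F)^b := fun a b => pow_add _ _ _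
      rcases Nat.lt_or_ge i j with hc | hc
      · rw [show auxr j i = i from by unfold auxr; rw [if_pos hc], if_pos hc,
          show i + j + 1 + k₂ * m₁ = i + (j + 1 + k₂ * m₁) by ring, hp]
        ring
      · rw [show auxr j i = i + 1 from by unfold auxr; rw [if_neg (by omega)],
          if_neg (by omega),
          show i + 1 + j + 1 + k₂ * m₁ = (i + (j + 1 + k₂ * m₁)) + 1 by ring, pow_succ, hp]
        ring
    rw [Finset.sum_congr rfl hterm, ← Finset.mul_sum] at hq1
    have hc0 : (-1:F)^(j+1+k₂*m₁) ≠ 0 := pow_ne_zero _ (neg_ne_zero.mpr one_ne_zero)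
    exact (mul_eq_zero.mp hq1).resolve_left hc0
  have hstep : ∀ j, j ≤ m₁ → Y (auxR m₁ k₂ (j+1)) 0 = Y (auxR m₁ k₂ j) 0 := by
    intro j hjm
    have e1 := rel j (by omega)
    have e2 := rel (j+1) (by omega)
    have hsub : ∑ i ∈ Finset.range (m₁+1),
        ((-1:F)^i * Y (auxR m₁ k₂ (auxr j i)) 0 - (-1:F)^i * Y (auxR m₁ k₂ (auxr (j+1) i)) 0)
          = 0 := by
      rw [Finset.sum_sub_distrib, e1, e2, sub_zero]
    rw [Finset.sum_eq_single_of_mem j (Finset.mem_range.mpr (by omega))] at hsub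
    · have hj1 : auxr j j = j + 1 := by unfold auxr; rw [if_neg (by omega)]
      have hj2 : auxr (j+1) j = j := by unfold auxr; rw [if_pos (by omega)]
      rw [hj1, hj2, ← mul_sub] at hsub
      rcases mul_eq_zero.mp hsub with hl | hr
      · exact absurd hl (pow_ne_zero _ (neg_ne_zero.mpr one_ne_zero))
      · exact sub_eq_zero.mp hr
    · intro i _ hne
      have : auxr j i = auxr (j+1) i := by unfold auxr; split_ifs <;> omega
      rw [this, sub_self]
  have hcol : ∀ i, i ≤ m₁ + 1 → Y (auxR m₁ k₂ i) 0 = Y (auxR m₁ k₂ 0) 0 := by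
    intro i
    induction i with
    | zero => intro _; rfl
    | succ t ih => intro ht; rw [hstep t (by omega), ih (by omega)]
  have efin := rel (m₁+1) (le_refl _)
  have efin2 : ∑ i ∈ Finset.range (m₁+1), (-1:F)^i * Y (auxR m₁ k₂ 0) 0 = 0 := by
    rw [← efin]
    refine Finset.sum_congr rfl fun i hi => ?_
    have hi' := Finset.mem_range.mp hi
    have hii : auxr (m₁+1) i = i := by unfold auxr; rw [if_pos (by omega)]
    rw [hii, hcol i (by omega)]
  rw [← Finset.sum_mul, neg_one_geom_sum] at efin2
  have hodd : ¬ Even (m₁+1) := by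
    rw [Nat.even_iff] at hpar ⊢
    omega
  rw [if_neg hodd, one_mul] at efin2
  have e0 : (⟨0, by omega⟩ : Fin (m₁+k₂+2)) = auxR m₁ k₂ 0 := Fin.ext (by simp [auxR])
  have e0' : (⟨0, by omega⟩ : Fin (k₂+2)) = 0 := rfl
  rw [e0, e0']
  exact efin2
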